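/- One-dimensional moment comparison under Ehrhard symmetrization: for every z ∈ ℝ^{n−1}, ∫_{E_z} y dμ_z(y) ≥ ∫_{E^s_z} y dμ_z(y), where E^s_z = (−∞, φ_z⁻¹(μ_z(E_z))) is the half-line with the same μ_z-mass as E_z. -/

import Mathlib

open MeasureTheory Set
open Filter
open scoped ENNReal Topology

noncomputable section

/-- The quadratic form `⟨Ax, x⟩`. -/
def qf {m : ℕ} (A : Matrix (Fin m) (Fin m) ℝ) (x : Fin m → ℝ) : ℝ :=
  ∑ i, (∑ j, A i j * x j) * x i

/-- The weight `y ↦ exp(−|√A(z,y)|²/2) = exp(−⟨A(z,y),(z,y)⟩/2)`, the density of the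
one-dimensional measure `μ_z` on the section over `z ∈ ℝⁿ`. -/
def dens {n : ℕ} (A : Matrix (Fin (n + 1)) (Fin (n + 1)) ℝ) (z : Fin n → ℝ) (y : ℝ) : ℝ :=
  Real.exp (- qf A (Fin.snoc z y) / 2)

/-- The one-dimensional section `E_z` of `E ⊆ ℝⁿ × ℝ`. -/
def sect {n : ℕ} (E : Set ((Fin n → ℝ) × ℝ)) (z : Fin n → ℝ) : Set ℝ :=
  {y | (z, y) ∈ E}

lemma qf_smul {m : ℕ} (A : Matrix (Fin m) (Fin m) ℝ) (c : ℝ) (x : Fin m → ℝ) :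
    qf A (c • x) = c ^ 2 * qf A x := by
  simp only [qf, Pi.smul_apply, smul_eq_mul, Finset.mul_sum]
  refine Finset.sum_congr rfl fun i _ => ?_
  rw [show (∑ j, A i j * (c * x j)) = c * ∑ j, A i j * x j by
    rw [Finset.mul_sum]; exact Finset.sum_congr rfl fun j _ => by ring]
  ring

lemma qf_continuous {m : ℕ} (A : Matrix (Fin m) (Fin m) ℝ) : Continuous (qf A) := by
  unfold qf
  exact continuous_finset_sum _ fun i _ =>
    ((continuous_finset_sum _ fun j _ => (continuous_const.mul (continuous_apply j))).mul
      (continuous_apply i))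

lemma qf_pos {m : ℕ} {A : Matrix (Fin m) (Fin m) ℝ} (hA : A.PosDef) {x : Fin m → ℝ}
    (hx : x ≠ 0) : 0 < qf A x := by
  have := hA.dotProduct_mulVec_pos hx
  simpa [qf, dotProduct, Matrix.mulVec, mul_comm] using this

lemma qf_lower {m : ℕ} {A : Matrix (Fin (m + 1)) (Fin (m + 1)) ℝ} (hA : A.PosDef) :
    ∃ l > 0, ∀ x : Fin (m + 1) → ℝ, l * ‖x‖ ^ 2 ≤ qf A x := by
  have hne : (Metric.sphere (0 : Fin (m + 1) → ℝ) 1).Nonempty :=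
    NormedSpace.sphere_nonempty (E := Fin (m + 1) → ℝ) |>.mpr zero_le_one
  obtain ⟨x0, hx0, hmin⟩ := (isCompact_sphere (0 : Fin (m + 1) → ℝ) 1).exists_isMinOn hne
    (qf_continuous A).continuousOn
  have hx0n : ‖x0‖ = 1 := by simpa using hx0
  have hx0ne : x0 ≠ 0 := by intro h; rw [h] at hx0n; simp at hx0n
  refine ⟨qf A x0, qf_pos hA hx0ne, fun x => ?_⟩
  rcases eq_or_ne x 0 with rfl | hx
  · simp [qf]
  · have hxn : 0 < ‖x‖ := norm_pos_iff.mpr hx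
    have h1 : ‖(‖x‖⁻¹ • x)‖ = 1 := by
      rw [norm_smul, norm_inv, norm_norm, inv_mul_cancel₀ hxn.ne']
    have h2 : qf A x0 ≤ qf A (‖x‖⁻¹ • x) := hmin (by simpa using h1)
    have h3 : qf A (‖x‖⁻¹ • x) = (‖x‖⁻¹) ^ 2 * qf A x := qf_smul A _ x
    rw [h3] at h2
    have := mul_le_mul_of_nonneg_left h2 (sq_nonneg ‖x‖)
    calc qf A x0 * ‖x‖ ^ 2 = ‖x‖ ^ 2 * qf A x0 := by ring
    _ ≤ ‖x‖ ^ 2 * ((‖x‖⁻¹) ^ 2 * qf A x) := this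
    _ = qf A x := by field_simp

lemma dens_continuous {n : ℕ} (A : Matrix (Fin (n + 1)) (Fin (n + 1)) ℝ) (z : Fin n → ℝ) :
    Continuous (dens A z) := by
  unfold dens
  have h2 : Continuous fun y : ℝ => (Fin.snoc z y : Fin (n + 1) → ℝ) := by
    refine continuous_pi fun i => ?_
    induction i using Fin.lastCases with
    | last => simpa [Fin.snoc_last] using continuous_id'
    | cast i => simpa [Fin.snoc_castSucc] using continuous_const
  have h1 : Continuous fun y : ℝ => qf A (Fin.snoc z y) := (qf_continuous A).comp h2
  exact Real.continuous_exp.comp ((h1.neg).div_const 2)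

lemma dens_pos {n : ℕ} (A : Matrix (Fin (n + 1)) (Fin (n + 1)) ℝ) (z : Fin n → ℝ) (y : ℝ) :
    0 < dens A z y := Real.exp_pos _

lemma dens_le {n : ℕ} {A : Matrix (Fin (n + 1)) (Fin (n + 1)) ℝ} (hA : A.PosDef)
    (z : Fin n → ℝ) : ∃ l > 0, ∀ y : ℝ, dens A z y ≤ Real.exp (-(l * y ^ 2)) := by
  obtain ⟨l, hl, hq⟩ := qf_lower hA
  refine ⟨l / 2, by positivity, fun y => ?_⟩
  rw [dens]
  apply Real.exp_le_exp.mpr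
  have h1 : |y| ≤ ‖(Fin.snoc z y : Fin (n + 1) → ℝ)‖ := by
    simpa [Fin.snoc_last] using norm_le_pi_norm (Fin.snoc z y : Fin (n + 1) → ℝ) (Fin.last n)
  have h2 : l * y ^ 2 ≤ qf A (Fin.snoc z y) := by
    refine le_trans ?_ (hq _)
    have : y ^ 2 ≤ ‖(Fin.snoc z y : Fin (n + 1) → ℝ)‖ ^ 2 := by
      rw [← sq_abs]
      exact pow_le_pow_left₀ (abs_nonneg y) h1 2
    nlinarith
  linarith

lemma abs_mul_exp_le (b t : ℝ) (hb : 0 < b) :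
    |t| * Real.exp (-(2 * b * t ^ 2)) ≤ (1 / (2 * Real.sqrt b)) * Real.exp (-(b * t ^ 2)) := by
  have hsb : 0 < Real.sqrt b := Real.sqrt_pos.mpr hb
  have key : |t| * Real.exp (-(b * t ^ 2)) ≤ 1 / (2 * Real.sqrt b) := by
    have h1 : b * t ^ 2 + 1 ≤ Real.exp (b * t ^ 2) := Real.add_one_le_exp _
    have h2 : 2 * Real.sqrt b * |t| ≤ 1 + b * t ^ 2 := by
      nlinarith [sq_nonneg (Real.sqrt b * |t| - 1), Real.sq_sqrt hb.le, sq_abs t]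
    have h3 : 2 * Real.sqrt b * |t| ≤ Real.exp (b * t ^ 2) := by linarith
    rw [Real.exp_neg]
    rw [mul_inv_le_iff₀ (Real.exp_pos _), div_mul_eq_mul_div, le_div_iff₀ (by positivity)]
    nlinarith
  have := mul_le_mul_of_nonneg_right key (Real.exp_pos (-(b * t ^ 2))).le
  calc |t| * Real.exp (-(2 * b * t ^ 2))
      = |t| * Real.exp (-(b * t ^ 2)) * Real.exp (-(b * t ^ 2)) := by
        have h4 : Real.exp (-(2 * b * t ^ 2)) =
            Real.exp (-(b * t ^ 2)) * Real.exp (-(b * t ^ 2)) := by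
          rw [← Real.exp_add]; congr 1; ring
        rw [h4, ← mul_assoc]
    _ ≤ 1 / (2 * Real.sqrt b) * Real.exp (-(b * t ^ 2)) := this

lemma dens_integrable {n : ℕ} {A : Matrix (Fin (n + 1)) (Fin (n + 1)) ℝ} (hA : A.PosDef)
    (z : Fin n → ℝ) : Integrable (dens A z) := by
  obtain ⟨l, hl, hd⟩ := dens_le hA z
  refine Integrable.mono' (g := fun y => Real.exp (-(l * y ^ 2)))
    ?_ (dens_continuous A z).aestronglyMeasurable (ae_of_all _ fun y => ?_)
  · simpa [neg_mul] using integrable_exp_neg_mul_sq hl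
  · rw [Real.norm_eq_abs, abs_of_pos (dens_pos A z y)]; exact hd y

lemma abs_dens_integrable {n : ℕ} {A : Matrix (Fin (n + 1)) (Fin (n + 1)) ℝ} (hA : A.PosDef)
    (z : Fin n → ℝ) : Integrable (fun y => |y| * dens A z y) := by
  obtain ⟨l, hl, hd⟩ := dens_le hA z
  have hl2 : 0 < l / 2 := by positivity
  refine Integrable.mono' (g := fun y => (1 / (2 * Real.sqrt (l / 2))) *
      Real.exp (-(l / 2 * y ^ 2))) ?_
    ((continuous_abs.mul (dens_continuous A z)).aestronglyMeasurable) (ae_of_all _ fun y => ?_)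
  · exact ((by simpa [neg_mul] using integrable_exp_neg_mul_sq hl2 :
      Integrable fun y : ℝ => Real.exp (-(l / 2 * y ^ 2)))).const_mul _
  · rw [Real.norm_eq_abs, abs_of_nonneg (mul_nonneg (abs_nonneg y) (dens_pos A z y).le)]
    calc |y| * dens A z y ≤ |y| * Real.exp (-(l * y ^ 2)) := by
          exact mul_le_mul_of_nonneg_left (hd y) (abs_nonneg y)
      _ = |y| * Real.exp (-(2 * (l / 2) * y ^ 2)) := by ring_nf
      _ ≤ 1 / (2 * Real.sqrt (l / 2)) * Real.exp (-(l / 2 * y ^ 2)) := abs_mul_exp_le _ _ hl2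

/-- One-dimensional moment comparison under Ehrhard symmetrization:
`∫_{E_z} y dμ_z(y) ≥ ∫_{E^s_z} y dμ_z(y)`, where
`E^s_z = (−∞, φ_z⁻¹(μ_z(E_z))) = {y : φ_z(y) < μ_z(E_z)}` is the half-line with the
same `μ_z`-mass as `E_z` (here `φ_z(y) = μ_z((−∞,y))`). -/
theorem moment_comparison {n : ℕ} (A : Matrix (Fin (n + 1)) (Fin (n + 1)) ℝ)
    (hA : A.PosDef) (E : Set ((Fin n → ℝ) × ℝ)) (hE : MeasurableSet E)
    (z : Fin n → ℝ)
    (hInt : IntegrableOn (fun y : ℝ => |y| * dens A z y) (sect E z)) :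
    (∫ y in {y : ℝ | (∫ t in Set.Iio y, dens A z t) < ∫ t in sect E z, dens A z t},
        y * dens A z y) ≤ ∫ y in sect E z, y * dens A z y := by
  clear hInt
  set f := dens A z with hfdef
  set E' := sect E z with hE'def
  have hE'meas : MeasurableSet E' := hE.preimage measurable_prodMk_left
  set m := ∫ t in E', f t with hmdef
  set φ := fun y : ℝ => ∫ t in Iio y, f t with hφdef
  set g := fun y : ℝ => y * f y with hgdef
  show (∫ y in {y : ℝ | φ y < m}, g y) ≤ ∫ y in E', g y
  have hf_pos : ∀ y, 0 < f y := dens_pos A z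
  have hf_cont : Continuous f := dens_continuous A z
  have hf_int : Integrable f := dens_integrable hA z
  have habs_int : Integrable fun y => |y| * f y := abs_dens_integrable hA z
  have hg_int : Integrable g := by
    refine habs_int.mono ((continuous_id.mul hf_cont).aestronglyMeasurable)
      (ae_of_all _ fun y => ?_)
    simp [hgdef, Real.norm_eq_abs, abs_mul, abs_abs, abs_of_pos (hf_pos y), le_refl]
  have hφ_mono : Monotone φ := fun a b hab =>
    setIntegral_mono_set hf_int.integrableOn (ae_of_all _ fun y => (hf_pos y).le)
      (HasSubset.Subset.eventuallyLE (Iio_subset_Iio hab))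
  have hpos : ∀ s : Set ℝ, MeasurableSet s → volume s ≠ 0 → 0 < ∫ t in s, f t := by
    intro s hs hvs
    rw [setIntegral_pos_iff_support_of_nonneg_ae (ae_of_all _ fun y => (hf_pos y).le)
      hf_int.integrableOn]
    have hsupp : Function.support f = univ := eq_univ_iff_forall.mpr fun y => (hf_pos y).ne'
    rw [hsupp, univ_inter]
    exact pos_iff_ne_zero.mpr hvs
  have hm_nonneg : 0 ≤ m := setIntegral_nonneg hE'meas fun y _ => (hf_pos y).le
  have hcompl : ∀ a : ℝ, φ a + ∫ t in Ici a, f t = ∫ t, f t := by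
    intro a
    have h := integral_add_compl (measurableSet_Iio (a := a)) hf_int
    rwa [compl_Iio] at h
  have hTop : Tendsto (fun k : ℕ => φ (k : ℝ)) atTop (𝓝 (∫ t, f t)) := by
    have hU : ⋃ k : ℕ, Iio ((k : ℝ)) = univ := by
      ext y; simp only [mem_iUnion, mem_Iio, mem_univ, iff_true]; exact exists_nat_gt y
    have h := tendsto_setIntegral_of_monotone (fun k : ℕ => measurableSet_Iio)
      (fun a b hab => Iio_subset_Iio (Nat.cast_le.mpr hab))
      (by rw [hU]; exact hf_int.integrableOn)
    rwa [hU, setIntegral_univ] at h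
  have hBot : Tendsto (fun k : ℕ => φ (-(k : ℝ))) atTop (𝓝 0) := by
    have hU : ⋃ k : ℕ, Ici (-(k : ℝ)) = univ := by
      ext y
      simp only [mem_iUnion, mem_Ici, mem_univ, iff_true]
      obtain ⟨k, hk⟩ := exists_nat_gt (-y)
      exact ⟨k, by linarith⟩
    have h := tendsto_setIntegral_of_monotone (fun k : ℕ => measurableSet_Ici)
      (fun a b hab => Ici_subset_Ici.mpr (neg_le_neg (Nat.cast_le.mpr hab)))
      (by rw [hU]; exact hf_int.integrableOn)
    rw [hU, setIntegral_univ] at h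
    have heq : ∀ k : ℕ, φ (-(k : ℝ)) = (∫ t, f t) - ∫ t in Ici (-(k : ℝ)), f t := by
      intro k; have := hcompl (-(k : ℝ)); linarith
    have h2 := (tendsto_const_nhds (x := ∫ t, f t) (f := atTop (α := ℕ))).sub h
    rw [sub_self] at h2
    exact h2.congr fun k => (heq k).symm
  by_cases hne : {y : ℝ | φ y < m}.Nonempty
  · by_cases hub : BddAbove {y : ℝ | φ y < m}
    · -- main case
      set S := {y : ℝ | φ y < m} with hSdef
      set c := sSup S with hcdef
      have hSc : ∀ y ∈ S, y ≤ c := fun y hy => le_csSup hub hy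
      have hlow : ∀ y, y < c → y ∈ S := by
        intro y hy
        obtain ⟨s, hs, hys⟩ := exists_lt_of_lt_csSup hne hy
        exact lt_of_le_of_lt (hφ_mono hys.le) hs
      have hcS : ∀ y, y ∉ S → c ≤ y := fun y hy => le_of_not_gt fun h => hy (hlow y h)
      have hSshape : S = Iio c ∨ S = Iic c := by
        by_cases hc : c ∈ S
        · right; ext y
          simp only [mem_Iic]
          constructor
          · exact fun hy => hSc y hy
          · intro hy
            rcases lt_or_eq_of_le hy with h | h
            · exact hlow y h
            · exact h ▸ hc
        · left; ext y
          simp only [mem_Iio]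
          constructor
          · intro hy
            rcases lt_or_eq_of_le (hSc y hy) with h | h
            · exact h
            · exact absurd (h ▸ hy) hc
          · exact hlow y
      have hSmeas : MeasurableSet S := by
        rcases hSshape with h | h <;> rw [h]
        exacts [measurableSet_Iio, measurableSet_Iic]
      have hφc_le : φ c ≤ m := by
        have hU : ⋃ k : ℕ, Iio (c - 1 / (k + 1)) = Iio c := by
          ext y
          simp only [mem_iUnion, mem_Iio]
          constructor
          · rintro ⟨k, hk⟩
            have : (0 : ℝ) < 1 / ((k : ℝ) + 1) := by positivity
            linarith
          · intro hy
            obtain ⟨k, hk⟩ := exists_nat_one_div_lt (sub_pos.mpr hy)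
            exact ⟨k, by linarith⟩
        have h := tendsto_setIntegral_of_monotone
          (s := fun k : ℕ => Iio (c - 1 / (k + 1)))
          (fun k : ℕ => measurableSet_Iio)
          (fun a b hab => Iio_subset_Iio (by
            have hab' : (a : ℝ) ≤ (b : ℝ) := Nat.cast_le.mpr hab
            have : 1 / ((b : ℝ) + 1) ≤ 1 / ((a : ℝ) + 1) :=
              one_div_le_one_div_of_le (by positivity) (by linarith)
            linarith))
          (by rw [hU]; exact hf_int.integrableOn)
        rw [hU] at h
        refine le_of_tendsto h (Filter.Eventually.of_forall fun k => ?_)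
        have hk : c - 1 / ((k : ℝ) + 1) < c := by
          have : (0 : ℝ) < 1 / ((k : ℝ) + 1) := by positivity
          linarith
        exact (hlow _ hk).le
      have hm_le_φc : m ≤ φ c := by
        have hI : ⋂ k : ℕ, Iio (c + 1 / (k + 1)) = Iic c := by
          ext y
          simp only [mem_iInter, mem_Iio, mem_Iic]
          constructor
          · intro h
            by_contra hyc
            push_neg at hyc
            obtain ⟨k, hk⟩ := exists_nat_one_div_lt (sub_pos.mpr hyc)
            linarith [h k]
          · intro h k
            have : (0 : ℝ) < 1 / ((k : ℝ) + 1) := by positivity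
            linarith
        have h := tendsto_setIntegral_of_antitone
          (s := fun k : ℕ => Iio (c + 1 / (k + 1)))
          (fun k : ℕ => measurableSet_Iio)
          (fun a b hab => Iio_subset_Iio (by
            have hab' : (a : ℝ) ≤ (b : ℝ) := Nat.cast_le.mpr hab
            have : 1 / ((b : ℝ) + 1) ≤ 1 / ((a : ℝ) + 1) :=
              one_div_le_one_div_of_le (by positivity) (by linarith)
            linarith))
          ⟨0, hf_int.integrableOn⟩
        rw [hI] at h
        have hIic : ∫ t in Iic c, f t = φ c := (setIntegral_congr_set Iio_ae_eq_Iic).symm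
        rw [hIic] at h
        refine ge_of_tendsto h (Filter.Eventually.of_forall fun k => ?_)
        have hk : c < c + 1 / ((k : ℝ) + 1) := by
          have : (0 : ℝ) < 1 / ((k : ℝ) + 1) := by positivity
          linarith
        have hnot : c + 1 / ((k : ℝ) + 1) ∉ S := fun h' => absurd (hSc _ h') (not_le.mpr hk)
        exact not_lt.mp hnot
      have hSf : ∫ t in S, f t = m := by
        have hφcm : φ c = m := le_antisymm hφc_le hm_le_φc
        rcases hSshape with h | h <;> rw [h]
        · exact hφcm
        · rw [← setIntegral_congr_set Iio_ae_eq_Iic]; exact hφcm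
      -- splitting
      have hsplitE := integral_inter_add_diff (s := E') (t := S) (f := g)
        hSmeas hg_int.integrableOn
      have hsplitS := integral_inter_add_diff (s := S) (t := E') (f := g)
        hE'meas hg_int.integrableOn
      have hsplitEf := integral_inter_add_diff (s := E') (t := S) (f := f)
        hSmeas hf_int.integrableOn
      have hsplitSf := integral_inter_add_diff (s := S) (t := E') (f := f)
        hE'meas hf_int.integrableOn
      rw [hSf] at hsplitSf
      have hmass : ∫ t in E' \ S, f t = ∫ t in S \ E', f t := by
        rw [inter_comm] at hsplitSf
        linarith
      have hge : c * ∫ t in E' \ S, f t ≤ ∫ t in E' \ S, g t := by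
        rw [← integral_const_mul]
        refine setIntegral_mono_on (hf_int.integrableOn.const_mul c)
          hg_int.integrableOn (hE'meas.diff hSmeas) fun y hy => ?_
        exact mul_le_mul_of_nonneg_right (hcS y hy.2) (hf_pos y).le
      have hle : ∫ t in S \ E', g t ≤ c * ∫ t in S \ E', f t := by
        rw [← integral_const_mul]
        refine setIntegral_mono_on hg_int.integrableOn
          (hf_int.integrableOn.const_mul c) (hSmeas.diff hE'meas) fun y hy => ?_
        exact mul_le_mul_of_nonneg_right (hSc y hy.1) (hf_pos y).le
      have hcomm : ∫ t in S ∩ E', g t = ∫ t in E' ∩ S, g t := by rw [inter_comm]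
      rw [← hmass] at hle
      show (∫ y in S, g y) ≤ ∫ y in E', g y
      linarith
    · -- S nonempty unbounded above
      have hallS : ∀ y, φ y < m := by
        intro y
        obtain ⟨s, hs, hys⟩ := not_bddAbove_iff.mp hub y
        exact lt_of_le_of_lt (hφ_mono hys.le) hs
      have hSuniv : {y : ℝ | φ y < m} = univ := eq_univ_iff_forall.mpr hallS
      have hTm : (∫ t, f t) ≤ m :=
        le_of_tendsto hTop (Filter.Eventually.of_forall fun k => (hallS _).le)
      have hcsum := integral_add_compl hE'meas hf_int (f := f)
      have hc_nonneg : 0 ≤ ∫ t in E'ᶜ, f t :=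
        setIntegral_nonneg hE'meas.compl fun y _ => (hf_pos y).le
      have hc0 : volume E'ᶜ = 0 := by
        by_contra h
        have := hpos E'ᶜ hE'meas.compl h
        linarith
      have hgc0 : ∫ t in E'ᶜ, g t = 0 := by
        rw [Measure.restrict_eq_zero.mpr hc0, integral_zero_measure]
      have hgsum := integral_add_compl hE'meas hg_int (f := g)
      rw [hSuniv, setIntegral_univ]
      linarith
  · -- S empty
    have hSempty : {y : ℝ | φ y < m} = ∅ := not_nonempty_iff_eq_empty.mp hne
    have hmle : m ≤ 0 := by
      refine ge_of_tendsto hBot (Filter.Eventually.of_forall fun k => ?_)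
      by_contra h
      push_neg at h
      exact hne ⟨-(k : ℝ), h⟩
    have hm0 : m = 0 := le_antisymm hmle hm_nonneg
    have hvol : volume E' = 0 := by
      by_contra h
      exact absurd hm0 (ne_of_gt (hpos E' hE'meas h))
    have hge0 : ∫ y in E', g y = 0 := by
      rw [Measure.restrict_eq_zero.mpr hvol, integral_zero_measure]
    rw [hSempty, setIntegral_empty, hge0]
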